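/- Let f₁ : ℝ³ → ℝ be defined by f₁(x, y, z) = x³ − x z² + y² z + z². Then the set of critical points of f₁ in ℝ³ is exactly {(0,0,0), (1, 0, √3), (1, 0, −√3)}; the critical point at the origin is degenerate (its Hessian matrix is singular); f₁(1, 0, √3) = f₁(1, 0, −√3) = 1; and the Hessian matrices of f₁ at (1, 0, √3) and (1, 0, −√3) are invertible, with exactly one negative eigenvalue (counted with multiplicity) at (1, 0, √3) and exactly two negative eigenvalues at (1, 0, −√3). -/

import Mathlib

/-- The perturbation `f₁ = x³ − xz² + y²z + z²` of the `P₈²` singularity. -/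
noncomputable def f1P82 : ℝ × ℝ × ℝ → ℝ :=
  fun p => p.1 ^ 3 - p.1 * p.2.2 ^ 2 + p.2.1 ^ 2 * p.2.2 + p.2.2 ^ 2

/-- The standard basis of `ℝ³ = ℝ × ℝ × ℝ`. -/
def stdBasis3 : Fin 3 → ℝ × ℝ × ℝ := ![(1, 0, 0), (0, 1, 0), (0, 0, 1)]

/-- The Hessian matrix of second partial derivatives of `f : ℝ³ → ℝ` at `x`. -/
noncomputable def hessian3 (f : ℝ × ℝ × ℝ → ℝ) (x : ℝ × ℝ × ℝ) :
    Matrix (Fin 3) (Fin 3) ℝ :=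
  fun i j => iteratedFDeriv ℝ 2 f x ![stdBasis3 i, stdBasis3 j]

/-- The number of negative eigenvalues (counted with multiplicity, i.e. as roots of the
characteristic polynomial) of a real square matrix. -/
noncomputable def negEigCount {n : ℕ} (M : Matrix (Fin n) (Fin n) ℝ) : ℕ :=
  Multiset.card (M.charpoly.roots.filter fun r => r < 0)

open ContinuousLinearMap in
noncomputable def PX : ℝ × ℝ × ℝ →L[ℝ] ℝ := fst ℝ ℝ (ℝ × ℝ)
open ContinuousLinearMap in
noncomputable def PY : ℝ × ℝ × ℝ →L[ℝ] ℝ := (fst ℝ ℝ ℝ).comp (snd ℝ ℝ (ℝ × ℝ))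
open ContinuousLinearMap in
noncomputable def PZ : ℝ × ℝ × ℝ →L[ℝ] ℝ := (snd ℝ ℝ ℝ).comp (snd ℝ ℝ (ℝ × ℝ))

@[simp] lemma PX_apply (v : ℝ × ℝ × ℝ) : PX v = v.1 := rfl
@[simp] lemma PY_apply (v : ℝ × ℝ × ℝ) : PY v = v.2.1 := rfl
@[simp] lemma PZ_apply (v : ℝ × ℝ × ℝ) : PZ v = v.2.2 := rfl

noncomputable def Dmap (p : ℝ × ℝ × ℝ) : ℝ × ℝ × ℝ →L[ℝ] ℝ :=
  (3 * p.1 ^ 2 - p.2.2 ^ 2) • PX + (2 * p.2.1 * p.2.2) • PY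
    + (-(2 * p.1 * p.2.2) + p.2.1 ^ 2 + 2 * p.2.2) • PZ

lemma hasFDeriv_f1 (p : ℝ × ℝ × ℝ) : HasFDerivAt f1P82 (Dmap p) p := by
  have hx : HasFDerivAt (fun q : ℝ × ℝ × ℝ => q.1) PX p := hasFDerivAt_fst
  have hy : HasFDerivAt (fun q : ℝ × ℝ × ℝ => q.2.1) PY p :=
    hasFDerivAt_fst.comp p hasFDerivAt_snd
  have hz : HasFDerivAt (fun q : ℝ × ℝ × ℝ => q.2.2) PZ p :=
    hasFDerivAt_snd.comp p hasFDerivAt_snd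
  have h := ((((hx.mul hx).mul hx).sub (hx.mul (hz.mul hz))).add
      ((hy.mul hy).mul hz)).add (hz.mul hz)
  have hfg : f1P82 = fun q : ℝ × ℝ × ℝ =>
      q.1 * q.1 * q.1 - q.1 * (q.2.2 * q.2.2) + q.2.1 * q.2.1 * q.2.2 + q.2.2 * q.2.2 := by
    funext q; simp only [f1P82]; ring
  rw [hfg]
  convert h using 1
  iterate 6 rfl
  refine ContinuousLinearMap.ext fun v => ?_
  simp only [Dmap, ContinuousLinearMap.add_apply, ContinuousLinearMap.smul_apply,
    ContinuousLinearMap.sub_apply, PX_apply, PY_apply, PZ_apply, smul_eq_mul, Pi.mul_apply]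
  ring

noncomputable def Emap (p : ℝ × ℝ × ℝ) : ℝ × ℝ × ℝ →L[ℝ] (ℝ × ℝ × ℝ →L[ℝ] ℝ) :=
  ((6 * p.1) • PX - (2 * p.2.2) • PZ).smulRight PX
    + ((2 * p.2.2) • PY + (2 * p.2.1) • PZ).smulRight PY
    + ((-(2 * p.2.2)) • PX + (2 * p.2.1) • PY + (2 - 2 * p.1) • PZ).smulRight PZ

set_option maxHeartbeats 1000000 in
lemma hasFDeriv_Dmap (p : ℝ × ℝ × ℝ) : HasFDerivAt Dmap (Emap p) p := by
  have hx : HasFDerivAt (fun q : ℝ × ℝ × ℝ => q.1) PX p := hasFDerivAt_fst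
  have hy : HasFDerivAt (fun q : ℝ × ℝ × ℝ => q.2.1) PY p :=
    hasFDerivAt_fst.comp p hasFDerivAt_snd
  have hz : HasFDerivAt (fun q : ℝ × ℝ × ℝ => q.2.2) PZ p :=
    hasFDerivAt_snd.comp p hasFDerivAt_snd
  have hg1 := ((hx.mul hx).const_mul (3:ℝ)).sub (hz.mul hz)
  have hg2 := (hy.const_mul (2:ℝ)).mul hz
  have hg3 := ((((hx.const_mul (2:ℝ)).mul hz).neg).add (hy.mul hy)).add (hz.const_mul (2:ℝ))
  have h := ((hg1.smul (hasFDerivAt_const PX p)).add (hg2.smul (hasFDerivAt_const PY p))).add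
      (hg3.smul (hasFDerivAt_const PZ p))
  have hDG : Dmap = fun q : ℝ × ℝ × ℝ =>
      (3 * (q.1 * q.1) - q.2.2 * q.2.2) • PX + (2 * q.2.1 * q.2.2) • PY
        + (-(2 * q.1 * q.2.2) + q.2.1 * q.2.1 + 2 * q.2.2) • PZ := by
    funext q
    refine ContinuousLinearMap.ext fun v => ?_
    simp only [Dmap, ContinuousLinearMap.add_apply, ContinuousLinearMap.smul_apply,
      PX_apply, PY_apply, PZ_apply, smul_eq_mul]
    ring
  rw [hDG]
  convert h using 1
  iterate 7 rfl
  refine ContinuousLinearMap.ext fun v => ContinuousLinearMap.ext fun w => ?_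
  simp only [Emap, Pi.mul_apply, ContinuousLinearMap.add_apply, ContinuousLinearMap.smul_apply,
    ContinuousLinearMap.sub_apply, ContinuousLinearMap.neg_apply,
    ContinuousLinearMap.smulRight_apply, ContinuousLinearMap.zero_apply,
    PX_apply, PY_apply, PZ_apply, smul_eq_mul]
  ring

lemma fderiv_f1 : fderiv ℝ f1P82 = Dmap := funext fun p => (hasFDeriv_f1 p).fderiv

lemma hessian_eq (q : ℝ × ℝ × ℝ) : hessian3 f1P82 q =
    !![6*q.1, 0, -(2*q.2.2); 0, 2*q.2.2, 2*q.2.1; -(2*q.2.2), 2*q.2.1, 2-2*q.1] := by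
  have h2 : fderiv ℝ (fderiv ℝ f1P82) q = Emap q := by
    rw [fderiv_f1]; exact (hasFDeriv_Dmap q).fderiv
  funext i j
  rw [hessian3, iteratedFDeriv_two_apply, h2]
  fin_cases i <;> fin_cases j <;>
    simp [Emap, stdBasis3, ContinuousLinearMap.add_apply, ContinuousLinearMap.smul_apply,
      ContinuousLinearMap.sub_apply, ContinuousLinearMap.neg_apply,
      ContinuousLinearMap.smulRight_apply, smul_eq_mul] <;> ring

open Polynomial in
set_option maxHeartbeats 800000 in
lemma charA : (!![(6:ℝ),0,-(2*Real.sqrt 3); 0, 2*Real.sqrt 3, 0; -(2*Real.sqrt 3),0,0]).charpoly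
    = (X - C (2*Real.sqrt 3)) * ((X - C (3 + Real.sqrt 21)) * (X - C (3 - Real.sqrt 21))) := by
  have hs : (C (Real.sqrt 3) * C (Real.sqrt 3) : ℝ[X]) = 3 := by
    rw [← map_mul, Real.mul_self_sqrt (by norm_num)]
    exact map_ofNat C 3
  have ht : (C (Real.sqrt 21) * C (Real.sqrt 21) : ℝ[X]) = 21 := by
    rw [← map_mul, Real.mul_self_sqrt (by norm_num)]
    exact map_ofNat C 21
  rw [Matrix.charpoly, Matrix.det_fin_three]
  rw [Matrix.charmatrix_apply_eq, Matrix.charmatrix_apply_eq, Matrix.charmatrix_apply_eq,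
    Matrix.charmatrix_apply_ne _ _ _ (by decide), Matrix.charmatrix_apply_ne _ _ _ (by decide),
    Matrix.charmatrix_apply_ne _ _ _ (by decide), Matrix.charmatrix_apply_ne _ _ _ (by decide),
    Matrix.charmatrix_apply_ne _ _ _ (by decide), Matrix.charmatrix_apply_ne _ _ _ (by decide)]
  simp [map_ofNat, Matrix.vecHead, Matrix.vecTail]
  linear_combination (X - 2 * C (Real.sqrt 3)) * ht - 4 * (X - 2 * C (Real.sqrt 3)) * hs

open Polynomial

set_option maxHeartbeats 800000 in
lemma charB : (!![(6:ℝ),0,2*Real.sqrt 3; 0, -(2*Real.sqrt 3), 0; 2*Real.sqrt 3,0,0]).charpoly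
    = (X - C (-(2*Real.sqrt 3))) * ((X - C (3 + Real.sqrt 21)) * (X - C (3 - Real.sqrt 21))) := by
  have hs : (C (Real.sqrt 3) * C (Real.sqrt 3) : ℝ[X]) = 3 := by
    rw [← map_mul, Real.mul_self_sqrt (by norm_num)]
    exact map_ofNat C 3
  have ht : (C (Real.sqrt 21) * C (Real.sqrt 21) : ℝ[X]) = 21 := by
    rw [← map_mul, Real.mul_self_sqrt (by norm_num)]
    exact map_ofNat C 21
  rw [Matrix.charpoly, Matrix.det_fin_three]
  rw [Matrix.charmatrix_apply_eq, Matrix.charmatrix_apply_eq, Matrix.charmatrix_apply_eq,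
    Matrix.charmatrix_apply_ne _ _ _ (by decide), Matrix.charmatrix_apply_ne _ _ _ (by decide),
    Matrix.charmatrix_apply_ne _ _ _ (by decide), Matrix.charmatrix_apply_ne _ _ _ (by decide),
    Matrix.charmatrix_apply_ne _ _ _ (by decide), Matrix.charmatrix_apply_ne _ _ _ (by decide)]
  simp [map_ofNat, Matrix.vecHead, Matrix.vecTail]
  linear_combination (X + 2 * C (Real.sqrt 3)) * ht - 4 * (X + 2 * C (Real.sqrt 3)) * hs

lemma negEig_of_fact (M : Matrix (Fin 3) (Fin 3) ℝ) (a b c : ℝ)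
    (h : M.charpoly = (X - C a) * ((X - C b) * (X - C c))) :
    negEigCount M = Multiset.card (Multiset.filter (fun r => r < 0) {a, b, c}) := by
  rw [negEigCount, h,
    Polynomial.roots_mul (mul_ne_zero (X_sub_C_ne_zero a)
      (mul_ne_zero (X_sub_C_ne_zero b) (X_sub_C_ne_zero c))),
    Polynomial.roots_mul (mul_ne_zero (X_sub_C_ne_zero b) (X_sub_C_ne_zero c)),
    Polynomial.roots_X_sub_C, Polynomial.roots_X_sub_C, Polynomial.roots_X_sub_C]
  rfl

lemma sqrt21_gt_3 : (3:ℝ) < Real.sqrt 21 := by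
  rw [show (3:ℝ) = Real.sqrt 9 by rw [show (9:ℝ) = 3^2 by norm_num, Real.sqrt_sq (by norm_num)]]
  exact Real.sqrt_lt_sqrt (by norm_num) (by norm_num)

set_option maxHeartbeats 1000000 in
lemma crit_set : {x : ℝ × ℝ × ℝ | fderiv ℝ f1P82 x = 0}
    = {((0:ℝ), (0:ℝ), (0:ℝ)), (1, 0, Real.sqrt 3), (1, 0, -Real.sqrt 3)} := by
  have h3 : Real.sqrt 3 ^ 2 = 3 := Real.sq_sqrt (by norm_num)
  ext ⟨x, y, z⟩
  rw [Set.mem_setOf_eq, fderiv_f1]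
  simp only [Set.mem_insert_iff, Set.mem_singleton_iff, Prod.mk.injEq]
  constructor
  · intro h
    have h1 : 3 * x ^ 2 - z ^ 2 = 0 := by
      have := congrArg (fun L : ℝ × ℝ × ℝ →L[ℝ] ℝ => L (1, 0, 0)) h
      simpa [Dmap] using this
    have h2 : 2 * y * z = 0 := by
      have := congrArg (fun L : ℝ × ℝ × ℝ →L[ℝ] ℝ => L (0, 1, 0)) h
      simpa [Dmap] using this
    have h4 : -(2 * x * z) + y ^ 2 + 2 * z = 0 := by
      have := congrArg (fun L : ℝ × ℝ × ℝ →L[ℝ] ℝ => L (0, 0, 1)) h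
      simpa [Dmap] using this
    rcases mul_eq_zero.mp h2 with h2' | hz0
    · rcases mul_eq_zero.mp h2' with h2'' | hy0
      · norm_num at h2''
      · -- y = 0
        have hzx : 2 * z * (1 - x) = 0 := by nlinarith [hy0]
        rcases mul_eq_zero.mp hzx with h5 | h5
        · have hz0 : z = 0 := by linarith
          have hx0 : x = 0 := by
            have : x ^ 2 = 0 := by nlinarith
            exact pow_eq_zero_iff (n := 2) (by norm_num) |>.mp this
          exact Or.inl ⟨hx0, hy0, hz0⟩
        · have hx1 : x = 1 := by linarith
          have hz2 : z ^ 2 = 3 := by nlinarith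
          have : (z - Real.sqrt 3) * (z + Real.sqrt 3) = 0 := by nlinarith
          rcases mul_eq_zero.mp this with h6 | h6
          · right; left; exact ⟨hx1, hy0, by linarith⟩
          · right; right; exact ⟨hx1, hy0, by linarith⟩
    · -- z = 0
      have hx0 : x = 0 := by nlinarith
      have hy0 : y = 0 := by nlinarith
      exact Or.inl ⟨hx0, hy0, hz0⟩
  · rintro (⟨rfl, rfl, rfl⟩ | ⟨rfl, rfl, rfl⟩ | ⟨rfl, rfl, rfl⟩) <;>
    · refine ContinuousLinearMap.ext fun v => ?_
      simp [Dmap]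

lemma hessA : hessian3 f1P82 (1, 0, Real.sqrt 3)
    = !![(6:ℝ),0,-(2*Real.sqrt 3); 0, 2*Real.sqrt 3, 0; -(2*Real.sqrt 3),0,0] := by
  rw [hessian_eq]; ext i j; fin_cases i <;> fin_cases j <;> norm_num

lemma hessB : hessian3 f1P82 (1, 0, -Real.sqrt 3)
    = !![(6:ℝ),0,2*Real.sqrt 3; 0, -(2*Real.sqrt 3), 0; 2*Real.sqrt 3,0,0] := by
  rw [hessian_eq]; ext i j; fin_cases i <;> fin_cases j <;> norm_num


/-- the critical points of `f₁` are exactly `(0,0,0)`, `(1,0,√3)`,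
`(1,0,−√3)`; the origin is a degenerate critical point; the other two have critical
value `1`, are nondegenerate, and have Morse indices `1` and `2` respectively. -/
theorem stmt10 :
    {x : ℝ × ℝ × ℝ | fderiv ℝ f1P82 x = 0}
      = {(0, 0, 0), (1, 0, Real.sqrt 3), (1, 0, -Real.sqrt 3)} ∧
    (hessian3 f1P82 (0, 0, 0)).det = 0 ∧
    f1P82 (1, 0, Real.sqrt 3) = 1 ∧ f1P82 (1, 0, -Real.sqrt 3) = 1 ∧
    IsUnit (hessian3 f1P82 (1, 0, Real.sqrt 3)).det ∧
    IsUnit (hessian3 f1P82 (1, 0, -Real.sqrt 3)).det ∧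
    negEigCount (hessian3 f1P82 (1, 0, Real.sqrt 3)) = 1 ∧
    negEigCount (hessian3 f1P82 (1, 0, -Real.sqrt 3)) = 2 := by
  have h3 : Real.sqrt 3 ^ 2 = 3 := Real.sq_sqrt (by norm_num)
  have hpos : (0:ℝ) < Real.sqrt 3 := Real.sqrt_pos.mpr (by norm_num)
  have ha : ¬(2 * Real.sqrt 3 < 0) := not_lt.mpr (by positivity)
  have ha' : -(2 * Real.sqrt 3) < 0 := by nlinarith
  have hb : ¬(3 + Real.sqrt 21 < 0) := not_lt.mpr (by positivity)
  have hc : 3 - Real.sqrt 21 < 0 := by linarith [sqrt21_gt_3]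
  refine ⟨crit_set, ?_, ?_, ?_, ?_, ?_, ?_, ?_⟩
  · rw [hessian_eq]; norm_num [Matrix.det_fin_three]
  · norm_num [f1P82, h3]
  · norm_num [f1P82, h3]
  · rw [hessA]
    rw [Matrix.det_fin_three]
    refine isUnit_iff_ne_zero.mpr ?_
    norm_num [Matrix.vecHead, Matrix.vecTail, Matrix.cons_val_two, Matrix.cons_val_one, Matrix.cons_val_zero]

  · rw [hessB]
    rw [Matrix.det_fin_three]
    refine isUnit_iff_ne_zero.mpr ?_
    norm_num [Matrix.vecHead, Matrix.vecTail, Matrix.cons_val_two, Matrix.cons_val_one, Matrix.cons_val_zero]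

  · rw [hessA, negEig_of_fact _ _ _ _ charA]
    simp [Multiset.filter_cons, Multiset.filter_singleton, ha, hb, hc]
  · rw [hessB, negEig_of_fact _ _ _ _ charB]
    simp [Multiset.filter_cons, Multiset.filter_singleton, ha', hb, hc]
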